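/- Let N ≥ 1, let P be a real symmetric positive semidefinite N×N matrix, let φ ∈ {0,1}^N have exactly n entries equal to 1 with 1 ≤ n ≤ N, and suppose P_{ii} ≤ σ²/n for every index i with φ_i = 1, where σ > 0. Let 1 ≤ θ ≤ N be an integer, let 0 < γ_max < 1, let ψ ≥ (γ_max/4)(√(θ² + 4) − θ)², and let λ be a real number with 0 ≤ λ ≤ σ²/√(n ψ). Then every eigenvalue of the matrix (P + λ I) ∘ (φ φᵀ) is at most σ² (1 + 2N/((√5 − 1) √γ_max)). -/

import Mathlib

open Finset Matrix

set_option maxHeartbeats 1000000 in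
/-- Bound on the largest eigenvalue of `(P + λI) ∘ (φ φᵀ)`: if `P` is symmetric positive
semidefinite with `P i i ≤ σ²/n` on the support of the `0/1` vector `φ` (which has `n`
ones, `1 ≤ n ≤ N`), `1 ≤ θ ≤ N`, `0 < γ_max < 1`,
`ψ ≥ (γ_max/4)(√(θ² + 4) - θ)²` and `0 ≤ λ ≤ σ²/√(n ψ)`, then every eigenvalue of
`(P + λI) ∘ (φ φᵀ)` is at most `σ² (1 + 2N/((√5 - 1)√γ_max))`. -/
theorem stmt_12 (N : ℕ) (hN : 1 ≤ N) (P : Matrix (Fin N) (Fin N) ℝ) (hP : P.PosSemidef)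
    (φ : Fin N → ℝ) (hφ : ∀ i, φ i = 0 ∨ φ i = 1)
    (n : ℕ) (hn1 : 1 ≤ n) (hnN : n ≤ N)
    (hcard : (univ.filter fun i => φ i = 1).card = n)
    (σ : ℝ) (hσ : 0 < σ) (hdiag : ∀ i, φ i = 1 → P i i ≤ σ ^ 2 / n)
    (θ : ℕ) (hθ1 : 1 ≤ θ) (hθN : θ ≤ N)
    (γmax : ℝ) (hγ0 : 0 < γmax) (hγ1 : γmax < 1)
    (ψ : ℝ) (hψ : γmax / 4 * (Real.sqrt ((θ : ℝ) ^ 2 + 4) - (θ : ℝ)) ^ 2 ≤ ψ)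
    (lam : ℝ) (hlam0 : 0 ≤ lam) (hlam1 : lam ≤ σ ^ 2 / Real.sqrt (n * ψ)) :
    ∀ μ : ℝ,
      Module.End.HasEigenvalue
          (Matrix.toLin' ((P + lam • (1 : Matrix (Fin N) (Fin N) ℝ)).hadamard
            (vecMulVec φ φ))) μ →
        μ ≤ σ ^ 2 * (1 + 2 * N / ((Real.sqrt 5 - 1) * Real.sqrt γmax)) := by
  intro μ hμ
  -- notation
  set M : Matrix (Fin N) (Fin N) ℝ :=
    (P + lam • (1 : Matrix (Fin N) (Fin N) ℝ)).hadamard (vecMulVec φ φ) with hM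
  set s : ℝ := Real.sqrt 5 with hsdef
  set g : ℝ := Real.sqrt γmax with hgdef
  have hs2 : s ^ 2 = 5 := Real.sq_sqrt (by norm_num)
  have hs0 : 0 ≤ s := Real.sqrt_nonneg _
  have hsge : 2 ≤ s := by nlinarith [hs2, hs0]
  have hsle : s ≤ 3 := by nlinarith [hs2, hs0]
  have hg2 : g ^ 2 = γmax := Real.sq_sqrt hγ0.le
  have hg0 : 0 < g := Real.sqrt_pos.mpr hγ0
  have hNR : (1 : ℝ) ≤ (N : ℝ) := by exact_mod_cast hN
  have hnR : (1 : ℝ) ≤ (n : ℝ) := by exact_mod_cast hn1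
  have hθR : (1 : ℝ) ≤ (θ : ℝ) := by exact_mod_cast hθ1
  have hθNR : (θ : ℝ) ≤ (N : ℝ) := by exact_mod_cast hθN
  -- quadratic form nonnegativity instances
  have hq : ∀ (i j : Fin N) (a b : ℝ),
      0 ≤ a ^ 2 * P i i + 2 * (a * b) * P i j + b ^ 2 * P j j := by
    intro i j a b
    have hsym : P j i = P i j := by simpa using hP.1.apply i j
    have h := hP.dotProduct_mulVec_nonneg (a • (Pi.single i 1 : Fin N → ℝ) + b • (Pi.single j 1 : Fin N → ℝ))
    simp only [star_trivial, dotProduct_add, add_dotProduct, mulVec_add, mulVec_smul,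
      smul_dotProduct, dotProduct_smul, smul_eq_mul, mulVec_single, mul_one,
      single_dotProduct, one_mul, MulOpposite.op_one, one_smul, Matrix.col_apply] at h
    rw [hsym] at h; linarith
  -- entrywise Cauchy-Schwarz for PSD matrices
  have key : ∀ i j : Fin N, (P i j) ^ 2 ≤ P i i * P j j := by
    intro i j
    have h0 : 0 ≤ P i i := by have := hq i j 1 0; nlinarith [this]
    have h1 : 0 ≤ P j j := by have := hq i j 0 1; nlinarith [this]
    rcases eq_or_lt_of_le h0 with h | h
    · have hz : P i j = 0 := by
        by_contra hne
        have h2 := hq i j (-(P j j + 1) / (2 * P i j)) 1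
        have e : 2 * ((-(P j j + 1) / (2 * P i j)) * 1) * P i j = -(P j j + 1) := by
          field_simp
        rw [← h, e] at h2
        linarith
      rw [hz, ← h]; simp
    · have h2 := hq i j (P i j) (-(P i i))
      nlinarith [h2, h]
  have hdnn : ∀ i : Fin N, 0 ≤ P i i := fun i => by
    have := hq i i 1 0; nlinarith [this]
  -- eigenvector
  obtain ⟨v, hv⟩ := hμ.exists_hasEigenvector
  have hv0 : v ≠ 0 := hv.right
  have heig : M *ᵥ v = μ • v := by
    have := hv.apply_eq_smul
    rwa [Matrix.toLin'_apply] at this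
  have hvv : 0 < v ⬝ᵥ v := by
    obtain ⟨k, hk⟩ := Function.ne_iff.mp hv0
    refine Finset.sum_pos' (fun i _ => mul_self_nonneg _) ⟨k, Finset.mem_univ k, ?_⟩
    exact mul_self_pos.mpr hk
  -- expansion of quadratic form
  have hterm : ∀ i j : Fin N,
      v i * ((M i j) * v j)
        = (φ i * v i) * P i j * (φ j * v j)
          + (if i = j then lam * (φ i * v i) ^ 2 else 0) := by
    intro i j
    by_cases hij : i = j
    · subst hij
      simp only [hM, hadamard_apply, Matrix.add_apply, Matrix.smul_apply, Matrix.one_apply_eq,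
        vecMulVec_apply, smul_eq_mul, eq_self_iff_true, if_true]
      ring
    · simp only [hM, hadamard_apply, Matrix.add_apply, Matrix.smul_apply, Matrix.one_apply,
        vecMulVec_apply, smul_eq_mul, if_neg hij]
      ring
  have expand : v ⬝ᵥ (M *ᵥ v)
      = (∑ i, ∑ j, (φ i * v i) * P i j * (φ j * v j)) + lam * ∑ i, (φ i * v i) ^ 2 := by
    calc v ⬝ᵥ (M *ᵥ v) = ∑ i, ∑ j, v i * ((M i j) * v j) := by
          simp [dotProduct, mulVec, Finset.mul_sum]
      _ = ∑ i, ∑ j, ((φ i * v i) * P i j * (φ j * v j)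
            + (if i = j then lam * (φ i * v i) ^ 2 else 0)) :=
          Finset.sum_congr rfl fun i _ => Finset.sum_congr rfl fun j _ => hterm i j
      _ = (∑ i, ∑ j, (φ i * v i) * P i j * (φ j * v j)) + lam * ∑ i, (φ i * v i) ^ 2 := by
          simp [Finset.sum_add_distrib, Finset.sum_ite_eq, Finset.mul_sum]
  -- bound the P part
  set y : Fin N → ℝ := fun i => φ i * v i with hy
  set G : Fin N → ℝ := fun i => |y i| * Real.sqrt (P i i) with hG
  set S : Finset (Fin N) := univ.filter fun i => φ i = 1 with hS
  have habs : ∀ i j : Fin N, |P i j| ≤ Real.sqrt (P i i) * Real.sqrt (P j j) := by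
    intro i j
    calc |P i j| = Real.sqrt ((P i j) ^ 2) := (Real.sqrt_sq_eq_abs _).symm
      _ ≤ Real.sqrt (P i i * P j j) := Real.sqrt_le_sqrt (key i j)
      _ = Real.sqrt (P i i) * Real.sqrt (P j j) := Real.sqrt_mul (hdnn i) _
  have hPG : (∑ i, ∑ j, y i * P i j * y j) ≤ (∑ i, G i) * (∑ j, G j) := by
    rw [Finset.sum_mul_sum]
    refine Finset.sum_le_sum fun i _ => Finset.sum_le_sum fun j _ => ?_
    calc y i * P i j * y j ≤ |y i * P i j * y j| := le_abs_self _
      _ = |y i| * |P i j| * |y j| := by rw [abs_mul, abs_mul]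
      _ ≤ |y i| * (Real.sqrt (P i i) * Real.sqrt (P j j)) * |y j| :=
          mul_le_mul_of_nonneg_right
            (mul_le_mul_of_nonneg_left (habs i j) (abs_nonneg _)) (abs_nonneg _)
      _ = G i * G j := by simp only [hG]; ring
  have hGsum : (∑ i, G i) ≤ Real.sqrt (σ ^ 2 / n) * ∑ i ∈ S, |y i| := by
    have hzero : ∀ i ∈ univ, i ∉ S → G i = 0 := by
      intro i _ hiS
      have : φ i = 0 := by
        rcases hφ i with h | h
        · exact h
        · exact absurd (Finset.mem_filter.mpr ⟨Finset.mem_univ i, h⟩) hiS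
      simp [hG, hy, this]
    rw [← Finset.sum_subset (Finset.subset_univ S) hzero, Finset.mul_sum]
    refine Finset.sum_le_sum fun i hi => ?_
    have hφi : φ i = 1 := (Finset.mem_filter.mp hi).2
    have : Real.sqrt (P i i) ≤ Real.sqrt (σ ^ 2 / n) :=
      Real.sqrt_le_sqrt (hdiag i hφi)
    calc |y i| * Real.sqrt (P i i) ≤ |y i| * Real.sqrt (σ ^ 2 / n) :=
          mul_le_mul_of_nonneg_left this (abs_nonneg _)
      _ = Real.sqrt (σ ^ 2 / n) * |y i| := mul_comm _ _
  have hG0 : 0 ≤ ∑ i, G i :=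
    Finset.sum_nonneg fun i _ => mul_nonneg (abs_nonneg _) (Real.sqrt_nonneg _)
  have hsqCS : (∑ i ∈ S, |y i|) ^ 2 ≤ (n : ℝ) * ∑ i ∈ S, (y i) ^ 2 := by
    have := sq_sum_le_card_mul_sum_sq (s := S) (f := fun i => |y i|)
    simpa [hcard, sq_abs] using this
  have hPGfinal : (∑ i, ∑ j, y i * P i j * y j) ≤ σ ^ 2 * ∑ i, (y i) ^ 2 := by
    have h1 : (∑ i, G i) * (∑ j, G j)
        ≤ (Real.sqrt (σ ^ 2 / n) * ∑ i ∈ S, |y i|) ^ 2 := by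
      rw [← sq]
      exact pow_le_pow_left₀ hG0 hGsum 2
    have h2 : (Real.sqrt (σ ^ 2 / n) * ∑ i ∈ S, |y i|) ^ 2
        = σ ^ 2 / n * (∑ i ∈ S, |y i|) ^ 2 := by
      rw [mul_pow, Real.sq_sqrt (by positivity)]
    have h3 : σ ^ 2 / n * (∑ i ∈ S, |y i|) ^ 2 ≤ σ ^ 2 / n * ((n : ℝ) * ∑ i ∈ S, (y i) ^ 2) :=
      mul_le_mul_of_nonneg_left hsqCS (by positivity)
    have h4 : σ ^ 2 / n * ((n : ℝ) * ∑ i ∈ S, (y i) ^ 2) = σ ^ 2 * ∑ i ∈ S, (y i) ^ 2 := by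
      have hn0 : (n : ℝ) ≠ 0 := by positivity
      field_simp
    have h5 : σ ^ 2 * ∑ i ∈ S, (y i) ^ 2 ≤ σ ^ 2 * ∑ i, (y i) ^ 2 := by
      refine mul_le_mul_of_nonneg_left ?_ (by positivity)
      exact Finset.sum_le_sum_of_subset_of_nonneg (Finset.subset_univ S)
        fun i _ _ => sq_nonneg _
    calc (∑ i, ∑ j, y i * P i j * y j) ≤ (∑ i, G i) * (∑ j, G j) := hPG
      _ ≤ _ := h1
      _ = _ := h2
      _ ≤ _ := h3
      _ = _ := h4
      _ ≤ _ := h5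
  have hyv : (∑ i, (y i) ^ 2) ≤ ∑ i, (v i) ^ 2 := by
    refine Finset.sum_le_sum fun i _ => ?_
    rcases hφ i with h | h <;> simp [hy, h] <;> positivity
  have hyv0 : 0 ≤ ∑ i, (y i) ^ 2 := Finset.sum_nonneg fun i _ => sq_nonneg _
  have hvv' : v ⬝ᵥ v = ∑ i, (v i) ^ 2 := by simp [dotProduct, sq]
  -- μ ≤ σ² + lam
  have hmain : μ * (v ⬝ᵥ v) ≤ (σ ^ 2 + lam) * (v ⬝ᵥ v) := by
    have hL : v ⬝ᵥ (M *ᵥ v) = μ * (v ⬝ᵥ v) := by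
      rw [heig, dotProduct_smul, smul_eq_mul]
    rw [← hL, expand]
    have : (∑ i, ∑ j, y i * P i j * y j) + lam * ∑ i, (y i) ^ 2
        ≤ σ ^ 2 * ∑ i, (v i) ^ 2 + lam * ∑ i, (v i) ^ 2 := by
      have hA : (∑ i, ∑ j, y i * P i j * y j) ≤ σ ^ 2 * ∑ i, (v i) ^ 2 :=
        le_trans hPGfinal (mul_le_mul_of_nonneg_left hyv (by positivity))
      have hB : lam * ∑ i, (y i) ^ 2 ≤ lam * ∑ i, (v i) ^ 2 :=
        mul_le_mul_of_nonneg_left hyv hlam0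
      linarith
    calc (∑ i, ∑ j, y i * P i j * y j) + lam * ∑ i, (y i) ^ 2
        ≤ σ ^ 2 * ∑ i, (v i) ^ 2 + lam * ∑ i, (v i) ^ 2 := this
      _ = (σ ^ 2 + lam) * (v ⬝ᵥ v) := by rw [hvv']; ring
  have hmu : μ ≤ σ ^ 2 + lam := le_of_mul_le_mul_right hmain hvv
  -- arithmetic: lam ≤ σ² · 2N / ((√5-1)√γmax)
  set t : ℝ := Real.sqrt ((θ : ℝ) ^ 2 + 4) with htdef
  have ht2 : t ^ 2 = (θ : ℝ) ^ 2 + 4 := Real.sq_sqrt (by positivity)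
  have ht0 : 0 ≤ t := Real.sqrt_nonneg _
  have step1 : (s - 1) / (θ : ℝ) ≤ t - θ := by
    rw [div_le_iff₀ (by linarith : (0:ℝ) < (θ:ℝ))]
    nlinarith [ht2, hs2, ht0, hθR, hsge, hsle,
      mul_nonneg (sub_nonneg.mpr hsle) (by nlinarith : (0:ℝ) ≤ (θ:ℝ)^2 - 1),
      mul_nonneg ht0 (by linarith : (0:ℝ) ≤ (θ:ℝ))]
  have hψ' : γmax / 4 * ((s - 1) / (θ : ℝ)) ^ 2 ≤ ψ := by
    refine le_trans ?_ hψ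
    refine mul_le_mul_of_nonneg_left ?_ (by positivity)
    exact pow_le_pow_left₀ (div_nonneg (by linarith) (by linarith)) step1 2
  have e1 : γmax / 4 * ((s - 1) / (θ : ℝ)) ^ 2 = γmax * (s - 1) ^ 2 / (4 * (θ : ℝ) ^ 2) := by
    field_simp
  have hψpos : 0 < ψ := by
    refine lt_of_lt_of_le ?_ hψ'
    have hds : 0 < (s - 1) / (θ : ℝ) := div_pos (by linarith) (by linarith)
    have := pow_pos hds 2
    nlinarith [this, hγ0]
  have hnψ : γmax * (s - 1) ^ 2 / (4 * (N : ℝ) ^ 2) ≤ (n : ℝ) * ψ := by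
    have hθpos : (0:ℝ) < (θ:ℝ) := by linarith
    have hθ2 : (0:ℝ) < 4 * (θ:ℝ) ^ 2 := by positivity
    have hθN2 : 4 * (θ:ℝ) ^ 2 ≤ 4 * (N:ℝ) ^ 2 := by
      have h := pow_le_pow_left₀ hθpos.le hθNR 2
      linarith
    have hstep : γmax * (s - 1) ^ 2 / (4 * (N : ℝ) ^ 2)
        ≤ γmax * (s - 1) ^ 2 / (4 * (θ : ℝ) ^ 2) :=
      div_le_div_of_nonneg_left (mul_nonneg hγ0.le (sq_nonneg _)) hθ2 hθN2
    calc γmax * (s - 1) ^ 2 / (4 * (N : ℝ) ^ 2)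
        ≤ γmax * (s - 1) ^ 2 / (4 * (θ : ℝ) ^ 2) := hstep
      _ ≤ ψ := by rw [← e1]; exact hψ'
      _ ≤ (n : ℝ) * ψ := le_mul_of_one_le_left hψpos.le hnR
  have hsg0 : 0 ≤ (s - 1) * g := mul_nonneg (by linarith) hg0.le
  have hlow : (s - 1) * g / (2 * N) ≤ Real.sqrt ((n : ℝ) * ψ) := by
    rw [Real.le_sqrt (div_nonneg hsg0 (by linarith)) (by positivity)]
    calc ((s - 1) * g / (2 * N)) ^ 2 = γmax * (s - 1) ^ 2 / (4 * (N : ℝ) ^ 2) := by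
          rw [div_pow, mul_pow, hg2]; ring_nf
      _ ≤ (n : ℝ) * ψ := hnψ
  have hlampos : (0:ℝ) < (s - 1) * g / (2 * N) :=
    div_pos (mul_pos (by linarith) hg0) (by linarith)
  have hlam2 : lam ≤ σ ^ 2 * (2 * N) / ((s - 1) * g) := by
    have h1 : σ ^ 2 / Real.sqrt ((n : ℝ) * ψ) ≤ σ ^ 2 / ((s - 1) * g / (2 * N)) :=
      div_le_div_of_nonneg_left (by positivity) hlampos hlow
    have h2 : σ ^ 2 / ((s - 1) * g / (2 * N)) = σ ^ 2 * (2 * N) / ((s - 1) * g) :=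
      div_div_eq_mul_div _ _ _
    calc lam ≤ σ ^ 2 / Real.sqrt ((n : ℝ) * ψ) := by exact_mod_cast hlam1
      _ ≤ σ ^ 2 / ((s - 1) * g / (2 * N)) := h1
      _ = σ ^ 2 * (2 * N) / ((s - 1) * g) := h2
  have efinal : σ ^ 2 * (1 + 2 * N / ((s - 1) * g))
      = σ ^ 2 + σ ^ 2 * (2 * N) / ((s - 1) * g) := by ring
  rw [efinal]
  linarith
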